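/- arXiv:1102.4129 — 2 statements merged into one kernel-verified Lean document; each statement's English description precedes it below -/
import Mathlib

section
/- For the LMVT problem with n videos and B slots, the optimal value max over assignments f of min over videos i of Σ_{m: f(m)=i} r_{im} equals the maximum of min_i T[i] over all vectors T ∈ ℕⁿ with F(B, T), where F is the exact DP predicate. -/
/-- The exact dynamic programming predicate for LMVT: `F m T` holds iff an
allocation of the first `m` slots (slots `1,…,m`) to the `n` videos exists
giving video `i` at least `T i` bits. Slot `m` gives video `i` rate `r i m`. -/
def F (n : ℕ) (r : Fin n → ℕ → ℕ) : ℕ → (Fin n → ℕ) → Prop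
  | 0, T => T = 0
  | m + 1, T => F n r m T ∨ ∃ i : Fin n, F n r m (Function.update T i (T i - r i (m + 1)))

lemma Icc_succ (B : ℕ) : Finset.Icc 1 (B+1) = insert (B+1) (Finset.Icc 1 B) := by
  ext m
  simp only [Finset.mem_Icc, Finset.mem_insert]
  omega

lemma sum_succ (n : ℕ) (r : Fin n → ℕ → ℕ) (f : ℕ → Fin n) (B : ℕ) (j : Fin n) :
    ∑ m ∈ (Finset.Icc 1 (B+1)).filter (fun m => f m = j), r j m
      = (if f (B+1) = j then r j (B+1) else 0)
        + ∑ m ∈ (Finset.Icc 1 B).filter (fun m => f m = j), r j m := by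
  rw [Icc_succ, Finset.filter_insert]
  split_ifs with h
  · rw [Finset.sum_insert (by simp)]
  · simp

lemma lemA (n : ℕ) (r : Fin n → ℕ → ℕ) (f : ℕ → Fin n) :
    ∀ B, F n r B (fun i => ∑ m ∈ (Finset.Icc 1 B).filter (fun m => f m = i), r i m)
  | 0 => by
      simp [F]
      rfl
  | B + 1 => by
      right
      refine ⟨f (B+1), ?_⟩
      have h := lemA n r f B
      convert h using 1
      funext j
      by_cases hj : j = f (B+1)
      · subst hj
        simp [Function.update_self, sum_succ]
      · rw [Function.update_of_ne hj, sum_succ]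
        simp [Ne.symm hj]

lemma lemB (n : ℕ) (r : Fin n → ℕ → ℕ) (hn : 0 < n) :
    ∀ B (T : Fin n → ℕ), F n r B T →
      ∃ f : ℕ → Fin n, ∀ i,
        T i ≤ ∑ m ∈ (Finset.Icc 1 B).filter (fun m => f m = i), r i m
  | 0, T, h => by
      refine ⟨fun _ => ⟨0, hn⟩, fun i => ?_⟩
      simp [show T = 0 from h]
  | B + 1, T, h => by
      rcases h with h | ⟨i, h⟩
      · obtain ⟨f, hf⟩ := lemB n r hn B T h
        refine ⟨f, fun j => ?_⟩
        rw [sum_succ]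
        exact le_add_of_nonneg_of_le (Nat.zero_le _) (hf j)
      · obtain ⟨f, hf⟩ := lemB n r hn B _ h
        refine ⟨fun m => if m = B+1 then i else f m, fun j => ?_⟩
        rw [sum_succ]
        have hfilter : (Finset.Icc 1 B).filter
            (fun m => (if m = B+1 then i else f m) = j)
            = (Finset.Icc 1 B).filter (fun m => f m = j) := by
          apply Finset.filter_congr
          intro m hm
          have : m ≠ B + 1 := by
            have := Finset.mem_Icc.mp hm; omega
          simp [this]
        rw [hfilter]
        by_cases hj : j = i
        · subst hj
          have h1 := hf j
          rw [Function.update_self] at h1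
          simp only [if_true, if_pos rfl]
          calc T j ≤ (T j - r j (B+1)) + r j (B+1) := le_tsub_add
            _ ≤ _ := by omega
        · have h1 := hf j
          rw [Function.update_of_ne hj] at h1
          simp only [if_true, if_neg (Ne.symm hj), zero_add]
          exact h1

theorem stmt_12 (n B : ℕ) (hn : 0 < n) (r : Fin n → ℕ → ℕ) (hr : ∀ i m, 0 < r i m) :
    sSup {v : ℕ | ∃ f : ℕ → Fin n,
        v = ⨅ i : Fin n, ∑ m ∈ (Finset.Icc 1 B).filter (fun m => f m = i), r i m} =
    sSup {v : ℕ | ∃ T : Fin n → ℕ, F n r B T ∧ v = ⨅ i : Fin n, T i} := by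
  haveI : Nonempty (Fin n) := Fin.pos_iff_nonempty.mp hn
  set i₀ : Fin n := ⟨0, hn⟩
  set C : ℕ := ∑ m ∈ Finset.Icc 1 B, r i₀ m with hC
  -- every value in either set is ≤ C
  have hboundf : ∀ f : ℕ → Fin n,
      (⨅ i : Fin n, ∑ m ∈ (Finset.Icc 1 B).filter (fun m => f m = i), r i m) ≤ C := by
    intro f
    calc (⨅ i : Fin n, ∑ m ∈ (Finset.Icc 1 B).filter (fun m => f m = i), r i m)
        ≤ ∑ m ∈ (Finset.Icc 1 B).filter (fun m => f m = i₀), r i₀ m :=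
          ciInf_le (OrderBot.bddBelow _) i₀
      _ ≤ C := Finset.sum_le_sum_of_subset (Finset.filter_subset _ _)
  have hbdd2 : BddAbove {v : ℕ | ∃ T : Fin n → ℕ, F n r B T ∧ v = ⨅ i : Fin n, T i} := by
    refine ⟨C, fun v hv => ?_⟩
    obtain ⟨T, hT, rfl⟩ := hv
    obtain ⟨f, hf⟩ := lemB n r hn B T hT
    calc (⨅ i, T i) ≤ T i₀ := ciInf_le (OrderBot.bddBelow _) i₀
      _ ≤ ∑ m ∈ (Finset.Icc 1 B).filter (fun m => f m = i₀), r i₀ m := hf i₀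
      _ ≤ C := Finset.sum_le_sum_of_subset (Finset.filter_subset _ _)
  have hbdd1 : BddAbove {v : ℕ | ∃ f : ℕ → Fin n,
      v = ⨅ i : Fin n, ∑ m ∈ (Finset.Icc 1 B).filter (fun m => f m = i), r i m} := by
    refine ⟨C, fun v hv => ?_⟩
    obtain ⟨f, rfl⟩ := hv
    exact hboundf f
  have hne1 : {v : ℕ | ∃ f : ℕ → Fin n,
      v = ⨅ i : Fin n, ∑ m ∈ (Finset.Icc 1 B).filter (fun m => f m = i), r i m}.Nonempty :=
    ⟨_, fun _ => i₀, rfl⟩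
  have hne2 : {v : ℕ | ∃ T : Fin n → ℕ, F n r B T ∧ v = ⨅ i : Fin n, T i}.Nonempty := by
    refine ⟨_, _, lemA n r (fun _ => i₀) B, rfl⟩
  apply le_antisymm
  · apply csSup_le hne1
    rintro v ⟨f, rfl⟩
    exact le_csSup hbdd2 ⟨_, lemA n r f B, rfl⟩
  · apply csSup_le hne2
    rintro v ⟨T, hT, rfl⟩
    obtain ⟨f, hf⟩ := lemB n r hn B T hT
    calc (⨅ i, T i)
        ≤ ⨅ i, ∑ m ∈ (Finset.Icc 1 B).filter (fun m => f m = i), r i m :=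
          ciInf_mono (OrderBot.bddBelow _) hf
      _ ≤ sSup _ := le_csSup hbdd1 ⟨f, rfl⟩
end

section
/- For n ≥ 2 videos, the decision version of LMVT with linear lead function φ(b) = b is NP-hard: there is a polynomial-time many-one reduction from Partition to LMVT. -/
/-- Correctness of the polynomial-time many-one reduction from Partition to the
LMVT decision problem with linear lead function φ(b) = b: the Partition instance
`x₁,…,x_B` (with sum `U`, `U` even) has a solution iff the LMVT instance with 2
videos, rates `r₁ⱼ = r₂ⱼ = xⱼ`, and threshold `k = U/2` has a solution. -/
theorem stmt_16 (B : ℕ) (x : Fin B → ℕ) (hx : ∀ j, 0 < x j) (U : ℕ)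
    (hU : ∑ j, x j = U) (hEven : Even U) :
    (∃ s : Finset (Fin B), ∑ j ∈ s, x j = U / 2) ↔
    (∃ f : Fin B → Fin 2, ∀ i : Fin 2,
      U / 2 ≤ ∑ j ∈ Finset.univ.filter (fun j => f j = i), x j) := by
  obtain ⟨c, hc⟩ := hEven
  have h2 : U / 2 + U / 2 = U := by omega
  have key : ∀ f : Fin B → Fin 2,
      (∑ j ∈ Finset.univ.filter (fun j => f j = 0), x j)
      + (∑ j ∈ Finset.univ.filter (fun j => f j = 1), x j) = U := by
    intro f
    rw [← hU, ← Finset.sum_union]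
    · apply Finset.sum_congr _ (fun _ _ => rfl)
      ext j
      simp only [Finset.mem_union, Finset.mem_filter, Finset.mem_univ, true_and, iff_true]
      omega
    · rw [Finset.disjoint_filter]
      intro j _ h0 h1
      rw [h0] at h1
      exact absurd h1 (by decide)
  constructor
  · rintro ⟨s, hs⟩
    set g : Fin B → Fin 2 := fun j => if j ∈ s then 0 else 1 with hg
    refine ⟨g, ?_⟩
    have h0 : Finset.univ.filter (fun j => g j = 0) = s := by
      ext j; simp only [hg, Finset.mem_filter, Finset.mem_univ, true_and]
      by_cases h : j ∈ s <;> simp [h]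
    have hsum0 : ∑ j ∈ Finset.univ.filter (fun j => g j = 0), x j = U / 2 := by
      rw [h0, hs]
    have hsum1 : ∑ j ∈ Finset.univ.filter (fun j => g j = 1), x j = U / 2 := by
      have := key g
      omega
    intro i
    have hi : i = 0 ∨ i = 1 := by omega
    rcases hi with h | h <;> subst h
    · exact hsum0.ge
    · exact hsum1.ge
  · rintro ⟨f, hf⟩
    refine ⟨Finset.univ.filter (fun j => f j = 0), ?_⟩
    have := key f
    have := hf 0
    have := hf 1
    omega
end
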